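/- For every n and every sampling probability δ ∈ (0,1], the partial-observation detection error probability satisfies P_{e;δ}^{(n)} ≤ E[ exp( −δ² C_p (√n (X̄_n − S))² ) ], where C_p = (1−2p)²/2. -/

import Mathlib

open MeasureTheory Filter Real

lemma F_pos {m : ℝ} (hm0 : 0 ≤ m) (hm1 : m < 1) (θ : ℝ) :
    0 < Real.cosh θ + m * Real.sinh θ := by
  have h1 : Real.cosh θ + m * Real.sinh θ
      = (1 + m) / 2 * Real.exp θ + (1 - m) / 2 * Real.exp (-θ) := by
    rw [Real.cosh_eq, Real.sinh_eq]; ring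
  rw [h1]
  have := Real.exp_pos θ
  have := Real.exp_pos (-θ)
  nlinarith

lemma key_ineq {m : ℝ} (hm0 : 0 ≤ m) (hm1 : m < 1) (θ : ℝ) :
    Real.cosh θ + m * Real.sinh θ ≤ Real.exp (m * θ + θ ^ 2 / 2) := by
  set F : ℝ → ℝ := fun t => Real.cosh t + m * Real.sinh t with hF
  have hFpos : ∀ t, 0 < F t := fun t => F_pos hm0 hm1 t
  have hFd : ∀ t, HasDerivAt F (Real.sinh t + m * Real.cosh t) t := by
    intro t
    exact (Real.hasDerivAt_cosh t).add ((Real.hasDerivAt_sinh t).const_mul m)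
  -- G' as a function
  set G' : ℝ → ℝ := fun t => m + t - (Real.sinh t + m * Real.cosh t) / F t with hG'
  set G : ℝ → ℝ := fun t => m * t + t ^ 2 / 2 - Real.log (F t) with hG
  have hGd : ∀ t, HasDerivAt G (G' t) t := by
    intro t
    have h1 : HasDerivAt (fun t : ℝ => m * t + t ^ 2 / 2) (m + t) t := by
      have := ((hasDerivAt_id t).const_mul m).add
        (((hasDerivAt_pow 2 t).div_const 2))
      exact this.congr_deriv (by push_cast; ring)
    exact h1.sub ((hFd t).log (hFpos t).ne')
  have hG'd : ∀ t, HasDerivAt G' (1 - (F t * F t - (Real.sinh t + m * Real.cosh t) ^ 2) / (F t) ^ 2) t := by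
    intro t
    have hu : HasDerivAt (fun t => Real.sinh t + m * Real.cosh t) (F t) t := by
      have := (Real.hasDerivAt_sinh t).add ((Real.hasDerivAt_cosh t).const_mul m)
      exact this
    have hdiv := hu.div (hFd t) (hFpos t).ne'
    have h1 : HasDerivAt (fun t : ℝ => m + t) 1 t := (hasDerivAt_id t).const_add m
    have := h1.sub hdiv
    exact this.congr_deriv (by ring)
  have hG'nonneg : ∀ t, 0 ≤ 1 - (F t * F t - (Real.sinh t + m * Real.cosh t) ^ 2) / (F t) ^ 2 := by
    intro t
    have hF2 : F t * F t - (Real.sinh t + m * Real.cosh t) ^ 2 = 1 - m ^ 2 := by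
      have hcs := Real.cosh_sq_sub_sinh_sq t
      simp only [hF]; nlinarith [hcs]
    rw [hF2]
    have hsq : (F t) ^ 2 ≥ 1 - m ^ 2 := by
      have hF2' : (F t) ^ 2 - (Real.sinh t + m * Real.cosh t) ^ 2 = 1 - m ^ 2 := by
        have hcs := Real.cosh_sq_sub_sinh_sq t
        simp only [hF]; nlinarith [hcs]
      nlinarith [sq_nonneg (Real.sinh t + m * Real.cosh t)]
    have hFp2 : (0:ℝ) < (F t) ^ 2 := pow_pos (hFpos t) 2
    have : (1 - m ^ 2) / (F t) ^ 2 ≤ 1 := by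
      rw [div_le_one hFp2]; linarith
    linarith
  have hG'mono : Monotone G' := by
    apply monotone_of_deriv_nonneg
    · exact fun t => (hG'd t).differentiableAt
    · intro t
      rw [(hG'd t).deriv]
      exact hG'nonneg t
  have hG'0 : G' 0 = 0 := by
    simp [hG', hF, Real.cosh_zero, Real.sinh_zero]
  have hG0 : G 0 = 0 := by
    simp [hG, hF, Real.cosh_zero, Real.sinh_zero]
  have hGnonneg : 0 ≤ G θ := by
    rcases le_or_gt 0 θ with h | h
    · have hmono : MonotoneOn G (Set.Ici 0) := by
        apply monotoneOn_of_deriv_nonneg (convex_Ici 0)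
        · exact Continuous.continuousOn (by
            have : Differentiable ℝ G := fun t => (hGd t).differentiableAt
            exact this.continuous)
        · intro t ht
          exact ((hGd t).differentiableAt).differentiableWithinAt
        · intro t ht
          rw [(hGd t).deriv]
          have : G' 0 ≤ G' t := hG'mono (le_of_lt (by simpa using ht))
          linarith [hG'0 ▸ this]
      have := hmono (Set.self_mem_Ici) (Set.mem_Ici.mpr h) h
      linarith [hG0 ▸ this]
    · have hanti : AntitoneOn G (Set.Iic 0) := by
        apply antitoneOn_of_deriv_nonpos (convex_Iic 0)
        · exact Continuous.continuousOn (by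
            have : Differentiable ℝ G := fun t => (hGd t).differentiableAt
            exact this.continuous)
        · intro t ht
          exact ((hGd t).differentiableAt).differentiableWithinAt
        · intro t ht
          rw [(hGd t).deriv]
          have : G' t ≤ G' 0 := hG'mono (le_of_lt (by simpa using ht))
          linarith [hG'0 ▸ this]
      have := hanti (Set.mem_Iic.mpr h.le) (Set.self_mem_Iic) h.le
      linarith [hG0 ▸ this]
  have hlog : Real.log (F θ) ≤ m * θ + θ ^ 2 / 2 := by
    have : 0 ≤ m * θ + θ ^ 2 / 2 - Real.log (F θ) := hGnonneg
    linarith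
  calc F θ = Real.exp (Real.log (F θ)) := (Real.exp_log (hFpos θ)).symm
    _ ≤ Real.exp (m * θ + θ ^ 2 / 2) := Real.exp_le_exp.mpr hlog

lemma hoeff {p δ : ℝ} (hp0 : 0 < p) (hp1 : p < 1 / 2) (hδ0 : 0 < δ) (hδ1 : δ ≤ 1) (θ : ℝ) :
    δ * (1 - p) * Real.exp θ + δ * p * Real.exp (-θ) + (1 - δ)
      ≤ Real.exp (δ * (1 - 2 * p) * θ + θ ^ 2 / 2) := by
  set m := δ * (1 - 2 * p) with hm
  have hm0 : 0 ≤ m := by nlinarith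
  have hm1 : m < 1 := by nlinarith
  have h1 : δ * (1 - p) * Real.exp θ + δ * p * Real.exp (-θ) + (1 - δ)
      = (1 - δ) * (1 - Real.cosh θ) + (Real.cosh θ + m * Real.sinh θ)
        - (1 - δ) * m * Real.sinh θ / δ * 0 := by
    rw [Real.cosh_eq, Real.sinh_eq]; ring
  have h2 : (1 - δ) * (1 - Real.cosh θ) ≤ 0 := by
    have := Real.one_le_cosh θ
    nlinarith
  have h3 := key_ineq hm0 hm1 θ
  linarith [h1, h2, h3]
noncomputable def Qf (p δ xi v : ℝ) : ℝ :=
  ∑ u ∈ ({1, -1} : Finset ℝ), (if u = xi then 1 - p else p) *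
    (if v = u then δ else if v = 0 then 1 - δ else 0)

lemma Qf_nonneg {p δ : ℝ} (hp0 : 0 < p) (hp1 : p < 1 / 2) (hδ0 : 0 < δ) (hδ1 : δ ≤ 1)
    (xi v : ℝ) : 0 ≤ Qf p δ xi v := by
  apply Finset.sum_nonneg
  intro u _
  have h1 : (0:ℝ) ≤ if u = xi then 1 - p else p := by split <;> linarith
  have h2 : (0:ℝ) ≤ if v = u then δ else if v = 0 then 1 - δ else 0 := by
    split
    · linarith
    · split <;> linarith
  positivity

lemma coord {p δ : ℝ} (hp0 : 0 < p) (hp1 : p < 1 / 2) (hδ0 : 0 < δ) (hδ1 : δ ≤ 1)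
    (l xi : ℝ) (hxi : xi = 1 ∨ xi = -1) :
    ∑ v ∈ ({1, -1, 0} : Finset ℝ), Qf p δ xi v * Real.exp (l * v)
      ≤ Real.exp (l * (δ * (1 - 2 * p)) * xi + l ^ 2 / 2) := by
  have e1 : ({1, -1, 0} : Finset ℝ) = insert (1:ℝ) (insert (-1 : ℝ) {0}) := rfl
  rcases hxi with h | h <;> subst h
  · have := hoeff hp0 hp1 hδ0 hδ1 l
    rw [e1, Finset.sum_insert (by norm_num), Finset.sum_insert (by norm_num),
      Finset.sum_singleton]
    simp only [Qf, Finset.sum_insert (show (1:ℝ) ∉ ({-1} : Finset ℝ) by norm_num),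
      Finset.sum_singleton]
    norm_num
    calc (1 - p) * δ * Real.exp l + (p * δ * Real.exp (-l) + ((1 - p) * (1 - δ) + p * (1 - δ)))
        = δ * (1 - p) * Real.exp l + δ * p * Real.exp (-l) + (1 - δ) := by ring
      _ ≤ Real.exp (δ * (1 - 2 * p) * l + l ^ 2 / 2) := hoeff hp0 hp1 hδ0 hδ1 l
      _ = Real.exp (l * (δ * (1 - 2 * p)) + l ^ 2 / 2) := by ring_nf
  · rw [e1, Finset.sum_insert (by norm_num), Finset.sum_insert (by norm_num),
      Finset.sum_singleton]
    simp only [Qf, Finset.sum_insert (show (1:ℝ) ∉ ({-1} : Finset ℝ) by norm_num),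
      Finset.sum_singleton]
    norm_num
    calc p * δ * Real.exp l + ((1 - p) * δ * Real.exp (-l) + (p * (1 - δ) + (1 - p) * (1 - δ)))
        = δ * (1 - p) * Real.exp (-l) + δ * p * Real.exp (-(-l)) + (1 - δ) := by
          rw [neg_neg]; ring
      _ ≤ Real.exp (δ * (1 - 2 * p) * (-l) + (-l) ^ 2 / 2) := hoeff hp0 hp1 hδ0 hδ1 (-l)
      _ = Real.exp (-(l * (δ * (1 - 2 * p))) + l ^ 2 / 2) := by ring_nf
lemma chernoff {p δ S : ℝ} (hp0 : 0 < p) (hp1 : p < 1 / 2) (hδ0 : 0 < δ) (hδ1 : δ ≤ 1)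
    {n : ℕ} (hn : 0 < n) (x : Fin n → ℝ) (hx : ∀ i, x i = 1 ∨ x i = -1) :
    ∑ w ∈ Fintype.piFinset (fun _ : Fin n => ({1, -1, 0} : Finset ℝ)),
      (if ((∑ i, x i) / n - S) * ((∑ i, w i) / n - δ * (1 - 2 * p) * S) < 0 then (1:ℝ) else 0)
        * ∏ i, Qf p δ (x i) (w i)
      ≤ Real.exp (-(δ ^ 2 * ((1 - 2 * p) ^ 2 / 2)) *
          (Real.sqrt n * ((∑ i, x i) / n - S)) ^ 2) := by
  have hnR : (0:ℝ) < n := by exact_mod_cast hn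
  set m := δ * (1 - 2 * p) with hm
  have hm0 : 0 < m := by nlinarith
  set d := (∑ i, x i) / (n:ℝ) - S with hd
  set l := -(m * d) with hl
  set c := l * ((n:ℝ) * (m * S)) with hc
  -- Step 1: pointwise bound
  have step1 : ∀ w : Fin n → ℝ,
      (if ((∑ i, x i) / (n:ℝ) - S) * ((∑ i, w i) / n - m * S) < 0 then (1:ℝ) else 0)
        * ∏ i, Qf p δ (x i) (w i)
      ≤ Real.exp (l * (∑ i, w i) - c) * ∏ i, Qf p δ (x i) (w i) := by
    intro w
    have hQ : 0 ≤ ∏ i, Qf p δ (x i) (w i) :=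
      Finset.prod_nonneg fun i _ => Qf_nonneg hp0 hp1 hδ0 hδ1 _ _
    apply mul_le_mul_of_nonneg_right _ hQ
    split
    · rename_i hbad
      apply Real.one_le_exp
      have hexp : l * (∑ i, w i) - c = -((n:ℝ) * m) * (d * ((∑ i, w i) / n - m * S)) := by
        field_simp [hl, hc]
        ring
      rw [hexp]
      have h2 : d * ((∑ i, w i) / n - m * S) < 0 := hbad
      nlinarith [mul_pos (mul_pos hnR hm0) (neg_pos.mpr h2)]
    · positivity
  calc ∑ w ∈ Fintype.piFinset (fun _ : Fin n => ({1, -1, 0} : Finset ℝ)),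
        (if ((∑ i, x i) / (n:ℝ) - S) * ((∑ i, w i) / n - m * S) < 0 then (1:ℝ) else 0)
          * ∏ i, Qf p δ (x i) (w i)
      ≤ ∑ w ∈ Fintype.piFinset (fun _ : Fin n => ({1, -1, 0} : Finset ℝ)),
        Real.exp (l * (∑ i, w i) - c) * ∏ i, Qf p δ (x i) (w i) :=
        Finset.sum_le_sum fun w _ => step1 w
    _ = Real.exp (-c) * ∑ w ∈ Fintype.piFinset (fun _ : Fin n => ({1, -1, 0} : Finset ℝ)),
        ∏ i, (Qf p δ (x i) (w i) * Real.exp (l * w i)) := by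
        rw [Finset.mul_sum]
        apply Finset.sum_congr rfl
        intro w _
        rw [Finset.prod_mul_distrib, ← Real.exp_sum, ← Finset.mul_sum,
          show l * ∑ i, w i - c = -c + l * ∑ i, w i by ring, Real.exp_add]
        ring
    _ = Real.exp (-c) * ∏ i, ∑ v ∈ ({1, -1, 0} : Finset ℝ), Qf p δ (x i) v * Real.exp (l * v) := by
        rw [Finset.prod_univ_sum]
    _ ≤ Real.exp (-c) * ∏ i, Real.exp (l * m * x i + l ^ 2 / 2) := by
        apply mul_le_mul_of_nonneg_left _ (Real.exp_pos _).le
        apply Finset.prod_le_prod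
        · intro i _
          apply Finset.sum_nonneg
          intro v _
          exact mul_nonneg (Qf_nonneg hp0 hp1 hδ0 hδ1 _ _) (Real.exp_pos _).le
        · intro i _
          have := coord hp0 hp1 hδ0 hδ1 l (x i) (hx i)
          calc ∑ v ∈ ({1, -1, 0} : Finset ℝ), Qf p δ (x i) v * Real.exp (l * v)
              ≤ Real.exp (l * (δ * (1 - 2 * p)) * x i + l ^ 2 / 2) := this
            _ = Real.exp (l * m * x i + l ^ 2 / 2) := by rw [← hm]
    _ = Real.exp (-c + (l * m * (∑ i, x i) + n * (l ^ 2 / 2))) := by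
        rw [← Real.exp_sum, ← Real.exp_add]
        congr 1
        rw [Finset.sum_add_distrib, ← Finset.mul_sum, Finset.sum_const]
        simp [Finset.card_univ, nsmul_eq_mul]
    _ = Real.exp (-(δ ^ 2 * ((1 - 2 * p) ^ 2 / 2)) *
          (Real.sqrt n * ((∑ i, x i) / n - S)) ^ 2) := by
        have hsq : (Real.sqrt n) ^ 2 = (n:ℝ) := Real.sq_sqrt (Nat.cast_nonneg n)
        have hs : (∑ i, x i) = (n:ℝ) * d + (n:ℝ) * S := by
          rw [hd]; field_simp; ring
        congr 1
        rw [mul_pow, hsq, hd.symm, hs, hc, hl, hm]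
        ring
lemma partition_toReal {Ω : Type*} [MeasurableSpace Ω] (P : MeasureTheory.Measure Ω)
    [MeasureTheory.IsFiniteMeasure P]
    {α : Type*} [MeasurableSpace α] [MeasurableSingletonClass α]
    {Z : Ω → α} (hZ : Measurable Z) (T : Finset α) (hT : ∀ ω, Z ω ∈ T)
    {E : Set Ω} (hE : MeasurableSet E) :
    (P E).toReal = ∑ t ∈ T, (P (E ∩ Z ⁻¹' {t})).toReal := by
  have hcover : E = ⋃ t ∈ T, E ∩ Z ⁻¹' {t} := by
    ext ω
    simp only [Set.mem_iUnion, Set.mem_inter_iff, Set.mem_preimage, Set.mem_singleton_iff]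
    constructor
    · intro h; exact ⟨Z ω, hT ω, h, rfl⟩
    · rintro ⟨t, _, h, _⟩; exact h
  have hdisj : Set.PairwiseDisjoint (↑T) (fun t => E ∩ Z ⁻¹' {t}) := by
    intro a _ b _ hab
    apply Set.disjoint_left.mpr
    rintro ω ⟨_, ha⟩ ⟨_, hb⟩
    exact hab (by rw [← ha, ← hb] : a = b)
  have hmeas : ∀ t ∈ T, MeasurableSet (E ∩ Z ⁻¹' {t}) :=
    fun t _ => hE.inter (hZ (measurableSet_singleton t))
  conv_lhs => rw [hcover]
  rw [MeasureTheory.measure_biUnion_finset hdisj hmeas,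
    ENNReal.toReal_sum fun _ _ => MeasureTheory.measure_ne_top P _]
/-- In the sentiment detection model with partial observations
(`W n = Y_{·;δ}` keeps each measurement `Y i` independently with probability `δ` and
reports `0` otherwise), for every `n` and every sampling probability `δ ∈ (0,1]`,
the partial-observation detection error probability satisfies
`P_{e;δ}^{(n)} ≤ E[exp(-δ² C_p (√n (X̄_n - S))²)]` with `C_p = (1-2p)²/2`. -/
theorem supermajority_error_partial_observation_bound
    {Ω : Type*} [MeasurableSpace Ω] (P : Measure Ω) [IsProbabilityMeasure P]
    (p S δ : ℝ) (hp0 : 0 < p) (hp1 : p < 1 / 2) (hS0 : -1 < S) (hS1 : S < 1)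
    (hδ0 : 0 < δ) (hδ1 : δ ≤ 1)
    (X Y W : (n : ℕ) → Ω → Fin n → ℝ)
    (hXval : ∀ n ω i, X n ω i = 1 ∨ X n ω i = -1)
    (hYval : ∀ n ω i, Y n ω i = 1 ∨ Y n ω i = -1)
    (hWval : ∀ n ω i, W n ω i = 1 ∨ W n ω i = -1 ∨ W n ω i = 0)
    (hXmeas : ∀ n, Measurable (X n))
    (hYmeas : ∀ n, Measurable (Y n))
    (hWmeas : ∀ n, Measurable (W n))
    (hjoint : ∀ n (x y : Fin n → ℝ), (∀ i, x i = 1 ∨ x i = -1) →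
      (∀ i, y i = 1 ∨ y i = -1) →
      (P {ω | X n ω = x ∧ Y n ω = y}).toReal
        = (P {ω | X n ω = x}).toReal * ∏ i, (if y i = x i then 1 - p else p))
    (hpartial : ∀ n (x y w : Fin n → ℝ), (∀ i, x i = 1 ∨ x i = -1) →
      (∀ i, y i = 1 ∨ y i = -1) → (∀ i, w i = 1 ∨ w i = -1 ∨ w i = 0) →
      (P {ω | X n ω = x ∧ Y n ω = y ∧ W n ω = w}).toReal
        = (P {ω | X n ω = x ∧ Y n ω = y}).toReal *
            ∏ i, (if w i = y i then δ else if w i = 0 then 1 - δ else 0))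
    (n : ℕ) :
    (P {ω | ((∑ i, X n ω i) / n - S) * ((∑ i, W n ω i) / n - δ * (1 - 2 * p) * S) < 0}).toReal
      ≤ ∫ ω, Real.exp (-(δ ^ 2 * ((1 - 2 * p) ^ 2 / 2)) *
          (Real.sqrt n * ((∑ i, X n ω i) / n - S)) ^ 2) ∂P := by
  classical
  rcases Nat.eq_zero_or_pos n with hn0 | hn
  · subst hn0
    have hempty : {ω : Ω | ((∑ i, X 0 ω i) / (0:ℕ) - S) *
        ((∑ i, W 0 ω i) / (0:ℕ) - δ * (1 - 2 * p) * S) < 0} = ∅ := by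
      ext ω
      simp only [Set.mem_setOf_eq, Set.mem_empty_iff_false, iff_false, not_lt]
      have h1 : (∑ i, X 0 ω i) = 0 := by simp
      have h2 : (∑ i, W 0 ω i) = 0 := by simp
      rw [h1, h2]
      norm_num
      nlinarith [mul_nonneg (mul_nonneg hδ0.le (by linarith : (0:ℝ) ≤ 1 - 2 * p)) (sq_nonneg S)]
    rw [hempty]
    simp only [measure_empty, ENNReal.toReal_zero]
    exact integral_nonneg fun ω => (Real.exp_pos _).le
  have hnR : (0:ℝ) < n := by exact_mod_cast hn
  -- value finsets
  set T2 : Finset (Fin n → ℝ) := Fintype.piFinset (fun _ : Fin n => ({1, -1} : Finset ℝ))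
    with hT2
  set T3 : Finset (Fin n → ℝ) := Fintype.piFinset (fun _ : Fin n => ({1, -1, 0} : Finset ℝ))
    with hT3
  have hXmem : ∀ ω, X n ω ∈ T2 := by
    intro ω
    rw [hT2, Fintype.mem_piFinset]
    intro i
    rcases hXval n ω i with h | h <;> simp [h]
  have hYmem : ∀ ω, Y n ω ∈ T2 := by
    intro ω
    rw [hT2, Fintype.mem_piFinset]
    intro i
    rcases hYval n ω i with h | h <;> simp [h]
  have hWmem : ∀ ω, W n ω ∈ T3 := by
    intro ω
    rw [hT3, Fintype.mem_piFinset]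
    intro i
    rcases hWval n ω i with h | h | h <;> simp [h]
  have hT2val : ∀ x ∈ T2, ∀ i, x i = 1 ∨ x i = -1 := by
    intro x hx i
    have := Fintype.mem_piFinset.mp hx i
    simpa using this
  have hT3val : ∀ w ∈ T3, ∀ i, w i = 1 ∨ w i = -1 ∨ w i = 0 := by
    intro w hw i
    have := Fintype.mem_piFinset.mp hw i
    simpa using this
  -- measurability
  have hSX : Measurable fun ω => ∑ i, X n ω i :=
    Finset.measurable_sum Finset.univ fun i _ => (measurable_pi_apply i).comp (hXmeas n)
  have hSW : Measurable fun ω => ∑ i, W n ω i :=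
    Finset.measurable_sum Finset.univ fun i _ => (measurable_pi_apply i).comp (hWmeas n)
  set E : Set Ω := {ω | ((∑ i, X n ω i) / n - S) *
      ((∑ i, W n ω i) / n - δ * (1 - 2 * p) * S) < 0} with hEdef
  have hE : MeasurableSet E := by
    apply measurableSet_lt _ measurable_const
    exact (((hSX.div_const _).sub measurable_const).mul
      ((hSW.div_const _).sub measurable_const))
  -- Step A: partition by X
  have stepA : (P E).toReal = ∑ x ∈ T2, (P (E ∩ X n ⁻¹' {x})).toReal :=
    partition_toReal P (hXmeas n) T2 hXmem hE
  -- Step B: partition by W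
  have stepB : ∀ x, (P (E ∩ X n ⁻¹' {x})).toReal
      = ∑ w ∈ T3, (P (E ∩ X n ⁻¹' {x} ∩ W n ⁻¹' {w})).toReal := by
    intro x
    exact partition_toReal P (hWmeas n) T3 hWmem
      (hE.inter ((hXmeas n) (measurableSet_singleton x)))
  -- Step C: resolve the event on each cell
  have stepC : ∀ x w, (P (E ∩ X n ⁻¹' {x} ∩ W n ⁻¹' {w})).toReal
      = (if ((∑ i, x i) / n - S) * ((∑ i, w i) / n - δ * (1 - 2 * p) * S) < 0
          then (1:ℝ) else 0) * (P {ω | X n ω = x ∧ W n ω = w}).toReal := by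
    intro x w
    by_cases hb : ((∑ i, x i) / (n:ℝ) - S) * ((∑ i, w i) / n - δ * (1 - 2 * p) * S) < 0
    · rw [if_pos hb, one_mul]
      congr 2
      ext ω
      simp only [hEdef, Set.mem_inter_iff, Set.mem_preimage, Set.mem_singleton_iff,
        Set.mem_setOf_eq]
      constructor
      · rintro ⟨⟨_, h2⟩, h3⟩; exact ⟨h2, h3⟩
      · rintro ⟨h2, h3⟩
        refine ⟨⟨?_, h2⟩, h3⟩
        rw [h2, h3]; exact hb
    · rw [if_neg hb, zero_mul]
      have : E ∩ X n ⁻¹' {x} ∩ W n ⁻¹' {w} = ∅ := by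
        ext ω
        simp only [hEdef, Set.mem_inter_iff, Set.mem_preimage, Set.mem_singleton_iff,
          Set.mem_setOf_eq, Set.mem_empty_iff_false, iff_false]
        rintro ⟨⟨h1, h2⟩, h3⟩
        rw [h2, h3] at h1
        exact hb h1
      rw [this]
      simp
  -- Step D,E,F: compute P(X=x ∧ W=w)
  have stepD : ∀ x ∈ T2, ∀ w ∈ T3, (P {ω | X n ω = x ∧ W n ω = w}).toReal
      = (P {ω | X n ω = x}).toReal * ∏ i, Qf p δ (x i) (w i) := by
    intro x hx w hw
    have hxv := hT2val x hx
    have hwv := hT3val w hw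
    have hset : {ω | X n ω = x ∧ W n ω = w} = X n ⁻¹' {x} ∩ W n ⁻¹' {w} := by
      ext ω; simp [Set.mem_setOf_eq]
    have hmeas2 : MeasurableSet (X n ⁻¹' {x} ∩ W n ⁻¹' {w}) :=
      ((hXmeas n) (measurableSet_singleton x)).inter ((hWmeas n) (measurableSet_singleton w))
    have hD : (P (X n ⁻¹' {x} ∩ W n ⁻¹' {w})).toReal
        = ∑ y ∈ T2, (P (X n ⁻¹' {x} ∩ W n ⁻¹' {w} ∩ Y n ⁻¹' {y})).toReal :=
      partition_toReal P (hYmeas n) T2 hYmem hmeas2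
    have hcell : ∀ y ∈ T2, (P (X n ⁻¹' {x} ∩ W n ⁻¹' {w} ∩ Y n ⁻¹' {y})).toReal
        = (P {ω | X n ω = x}).toReal * ∏ i, ((if y i = x i then 1 - p else p) *
            (if w i = y i then δ else if w i = 0 then 1 - δ else 0)) := by
      intro y hy
      have hyv := hT2val y hy
      have hset2 : X n ⁻¹' {x} ∩ W n ⁻¹' {w} ∩ Y n ⁻¹' {y}
          = {ω | X n ω = x ∧ Y n ω = y ∧ W n ω = w} := by
        ext ω
        simp only [Set.mem_inter_iff, Set.mem_preimage, Set.mem_singleton_iff,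
          Set.mem_setOf_eq]
        tauto
      rw [hset2, hpartial n x y w hxv hyv hwv, hjoint n x y hxv hyv,
        Finset.prod_mul_distrib]
      ring
    rw [hset, hD, Finset.sum_congr rfl hcell, ← Finset.mul_sum]
    congr 1
    simp only [Qf, hT2]
    rw [Finset.prod_univ_sum]
  -- combine
  rw [stepA]
  have stepG : ∀ x ∈ T2, (P (E ∩ X n ⁻¹' {x})).toReal
      ≤ (P {ω | X n ω = x}).toReal * Real.exp (-(δ ^ 2 * ((1 - 2 * p) ^ 2 / 2)) *
          (Real.sqrt n * ((∑ i, x i) / n - S)) ^ 2) := by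
    intro x hx
    rw [stepB x]
    have : ∀ w ∈ T3, (P (E ∩ X n ⁻¹' {x} ∩ W n ⁻¹' {w})).toReal
        = (P {ω | X n ω = x}).toReal *
          ((if ((∑ i, x i) / n - S) * ((∑ i, w i) / n - δ * (1 - 2 * p) * S) < 0
            then (1:ℝ) else 0) * ∏ i, Qf p δ (x i) (w i)) := by
      intro w hw
      rw [stepC x w, stepD x hx w hw]
      ring
    rw [Finset.sum_congr rfl this, ← Finset.mul_sum]
    apply mul_le_mul_of_nonneg_left _ ENNReal.toReal_nonneg
    exact chernoff hp0 hp1 hδ0 hδ1 hn x (hT2val x hx)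
  refine le_trans (Finset.sum_le_sum stepG) (le_of_eq ?_)
  -- integral side
  set g : (Fin n → ℝ) → ℝ := fun x => Real.exp (-(δ ^ 2 * ((1 - 2 * p) ^ 2 / 2)) *
      (Real.sqrt n * ((∑ i, x i) / n - S)) ^ 2) with hg
  have hfmeas : Measurable fun ω => g (X n ω) := by
    apply Real.measurable_exp.comp
    exact (measurable_const.mul ((((hSX.div_const _).sub measurable_const).const_mul
      (Real.sqrt n)).pow measurable_const))
  have hfle1 : ∀ ω, ‖g (X n ω)‖ ≤ 1 := by
    intro ω
    rw [Real.norm_eq_abs, abs_of_pos (Real.exp_pos _)]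
    have h1 : (0:ℝ) ≤ δ ^ 2 * ((1 - 2 * p) ^ 2 / 2) := by positivity
    have h2 : -(δ ^ 2 * ((1 - 2 * p) ^ 2 / 2)) *
        (Real.sqrt n * ((∑ i, X n ω i) / n - S)) ^ 2 ≤ 0 := by
      rw [neg_mul]
      exact neg_nonpos.mpr (mul_nonneg h1 (sq_nonneg _))
    calc Real.exp (-(δ ^ 2 * ((1 - 2 * p) ^ 2 / 2)) *
          (Real.sqrt n * ((∑ i, X n ω i) / n - S)) ^ 2)
        ≤ Real.exp 0 := Real.exp_le_exp.mpr h2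
      _ = 1 := Real.exp_zero
  have hfint : Integrable (fun ω => g (X n ω)) P := by
    apply Integrable.mono' (integrable_const (1:ℝ)) hfmeas.aestronglyMeasurable
    filter_upwards with ω using hfle1 ω
  have hcover : (Set.univ : Set Ω) = ⋃ x ∈ T2, X n ⁻¹' {x} := by
    ext ω
    simp only [Set.mem_univ, Set.mem_iUnion, Set.mem_preimage, Set.mem_singleton_iff,
      true_iff]
    exact ⟨X n ω, hXmem ω, rfl⟩
  have hdisj : Set.Pairwise (↑T2) (Function.onFun Disjoint fun x => X n ⁻¹' {x}) := by
    intro a _ b _ hab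
    apply Set.disjoint_left.mpr
    rintro ω ha hb
    simp only [Set.mem_preimage, Set.mem_singleton_iff] at ha hb
    exact hab (by rw [← ha, ← hb])
  have hint : ∫ ω, g (X n ω) ∂P = ∑ x ∈ T2, ∫ ω in X n ⁻¹' {x}, g (X n ω) ∂P := by
    rw [← setIntegral_univ, hcover]
    exact integral_biUnion_finset T2
      (fun x _ => (hXmeas n) (measurableSet_singleton x)) hdisj
      (fun x _ => hfint.integrableOn)
  have hcell2 : ∀ x ∈ T2, ∫ ω in X n ⁻¹' {x}, g (X n ω) ∂P
      = (P {ω | X n ω = x}).toReal * g x := by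
    intro x _
    have heq : Set.EqOn (fun ω => g (X n ω)) (fun _ => g x) (X n ⁻¹' {x}) := by
      intro ω hω
      simp only [Set.mem_preimage, Set.mem_singleton_iff] at hω
      simp [hω]
    rw [setIntegral_congr_fun ((hXmeas n) (measurableSet_singleton x)) heq,
      setIntegral_const, smul_eq_mul]
    rfl
  calc ∑ x ∈ T2, (P {ω | X n ω = x}).toReal * Real.exp (-(δ ^ 2 * ((1 - 2 * p) ^ 2 / 2)) *
          (Real.sqrt n * ((∑ i, x i) / n - S)) ^ 2)
      = ∑ x ∈ T2, ∫ ω in X n ⁻¹' {x}, g (X n ω) ∂P := by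
        apply Finset.sum_congr rfl
        intro x hx
        rw [hcell2 x hx]
    _ = ∫ ω, g (X n ω) ∂P := hint.symm
    _ = ∫ ω, Real.exp (-(δ ^ 2 * ((1 - 2 * p) ^ 2 / 2)) *
          (Real.sqrt n * ((∑ i, X n ω i) / n - S)) ^ 2) ∂P := rfl
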